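/- Let G be a graph without isolated vertices and v ∈ V(G) be such that G − v also has no isolated vertices. Then γ_{gr}^{×2}(G − v) ≤ γ_{gr}^{×2}(G) ≤ γ_{gr}^{×2}(G − v) + 3. -/

import Mathlib

open SimpleGraph

variable {V : Type*}

/-- The closed neighborhood of a vertex. -/
def cnbr (G : SimpleGraph V) (v : V) : Set V := insert v (G.neighborSet v)

/-- The number of vertices in the list `l` that dominate `u` (i.e. whose closed
neighborhood contains `u`). -/
noncomputable def domCount (G : SimpleGraph V) (u : V) (l : List V) : ℕ :=
  {w | w ∈ l ∧ u ∈ cnbr G w}.ncard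

/-- A double neighborhood sequence (DNS): a sequence of distinct vertices in which each
vertex dominates some vertex dominated at most once by its predecessors. -/
def IsDNS (G : SimpleGraph V) (l : List V) : Prop :=
  l.Nodup ∧ ∀ i : Fin l.length, ∃ u ∈ cnbr G (l.get i), domCount G u (l.take i) ≤ 1

/-- A double dominating sequence (DDS): a DNS whose underlying set is doubly dominating. -/
def IsDDS (G : SimpleGraph V) (l : List V) : Prop :=
  IsDNS G l ∧ ∀ v, 2 ≤ domCount G v l

/-- The Grundy double domination number: maximum length of a DDS. -/
noncomputable def gddn (G : SimpleGraph V) : ℕ :=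
  sSup {n | ∃ l : List V, IsDDS G l ∧ l.length = n}

/-- The maximum double neighborhood number: maximum length of a DNS. -/
noncomputable def mdnn (G : SimpleGraph V) : ℕ :=
  sSup {n | ∃ l : List V, IsDNS G l ∧ l.length = n}

/-- A legal (Grundy domination) sequence. -/
def IsLegal (G : SimpleGraph V) (l : List V) : Prop :=
  l.Nodup ∧ ∀ i : Fin l.length, ∃ u ∈ cnbr G (l.get i), domCount G u (l.take i) = 0

/-- A dominating sequence: legal sequence whose underlying set dominates. -/
def IsDomSeq (G : SimpleGraph V) (l : List V) : Prop :=
  IsLegal G l ∧ ∀ v, 1 ≤ domCount G v l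

/-- The Grundy domination number: maximum length of a dominating sequence. -/
noncomputable def grundy (G : SimpleGraph V) : ℕ :=
  sSup {n | ∃ l : List V, IsDomSeq G l ∧ l.length = n}

/-- The double domination number: minimum size of a double dominating set. -/
noncomputable def ddomNum (G : SimpleGraph V) : ℕ :=
  sInf {n | ∃ D : Set V, (∀ v, 2 ≤ {w | w ∈ D ∧ v ∈ cnbr G w}.ncard) ∧ D.ncard = n}

lemma mem_cnbr_comm {G : SimpleGraph V} {u w : V} : u ∈ cnbr G w ↔ w ∈ cnbr G u := by
  simp [cnbr, SimpleGraph.mem_neighborSet, adj_comm, eq_comm]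

section fin
variable [Fintype V] {G : SimpleGraph V}

lemma domCount_mono {u : V} {l₁ l₂ : List V} (h : ∀ x ∈ l₁, x ∈ l₂) :
    domCount G u l₁ ≤ domCount G u l₂ := by
  apply Set.ncard_le_ncard _ (Set.toFinite _)
  rintro x ⟨hx, hc⟩; exact ⟨h x hx, hc⟩

lemma domCount_congr {u : V} {l₁ l₂ : List V} (h : ∀ x, x ∈ l₁ ↔ x ∈ l₂) :
    domCount G u l₁ = domCount G u l₂ :=
  le_antisymm (domCount_mono fun x hx => (h x).mp hx) (domCount_mono fun x hx => (h x).mpr hx)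

lemma domCount_reverse {u : V} {l : List V} : domCount G u l.reverse = domCount G u l :=
  domCount_congr (by simp)

lemma domCount_cons_of_mem {u w : V} {l : List V} (h : u ∈ cnbr G w) (hw : w ∉ l) :
    domCount G u (w :: l) = domCount G u l + 1 := by
  unfold domCount
  have hset : {x | x ∈ w :: l ∧ u ∈ cnbr G x} = insert w {x | x ∈ l ∧ u ∈ cnbr G x} := by
    ext x
    constructor
    · rintro ⟨hx, hc⟩
      rcases List.mem_cons.mp hx with rfl | hx
      · exact Set.mem_insert _ _
      · exact Set.mem_insert_of_mem _ ⟨hx, hc⟩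
    · rintro (rfl | ⟨hx, hc⟩)
      · exact ⟨List.mem_cons_self, h⟩
      · exact ⟨List.mem_cons_of_mem _ hx, hc⟩
  rw [hset, Set.ncard_insert_of_notMem (fun hm => hw hm.1) (Set.toFinite _)]
end fin

def QDNS (G : SimpleGraph V) : List V → Prop
  | [] => True
  | w :: r => QDNS G r ∧ w ∉ r ∧ ∃ u ∈ cnbr G w, domCount G u r ≤ 1

lemma QDNS.nodup {G : SimpleGraph V} : ∀ {l : List V}, QDNS G l → l.Nodup
  | [], _ => List.nodup_nil
  | w :: r, ⟨hq, hw, _⟩ => List.nodup_cons.mpr ⟨hw, hq.nodup⟩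

section fin2
variable [Fintype V] {G : SimpleGraph V}

lemma isDNS_append_singleton (l : List V) (w : V) :
    IsDNS G (l ++ [w]) ↔ IsDNS G l ∧ w ∉ l ∧ ∃ u ∈ cnbr G w, domCount G u l ≤ 1 := by
  constructor
  · rintro ⟨hnd, hstep⟩
    rw [List.nodup_append] at hnd
    refine ⟨⟨hnd.1, ?_⟩, ?_, ?_⟩
    · intro i
      have hi : (i : ℕ) < (l ++ [w]).length := by simp
      obtain ⟨u, hu, hc⟩ := hstep ⟨i, hi⟩
      refine ⟨u, ?_, ?_⟩
      · simpa [List.get_eq_getElem, List.getElem_append_left i.2] using hu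
      · rwa [List.take_append_of_le_length (le_of_lt i.2)] at hc
    · exact fun hw => hnd.2.2 w hw w (List.mem_singleton_self w) rfl
    · have hi : l.length < (l ++ [w]).length := by simp
      obtain ⟨u, hu, hc⟩ := hstep ⟨l.length, hi⟩
      refine ⟨u, ?_, ?_⟩
      · simpa [List.get_eq_getElem] using hu
      · rwa [List.take_left] at hc
  · rintro ⟨⟨hnd, hstep⟩, hw, u, hu, hc⟩
    refine ⟨?_, ?_⟩
    · rw [List.nodup_append]
      exact ⟨hnd, List.nodup_singleton w, fun a ha b hb hab => hw (by rw [List.mem_singleton] at hb; rw [← hb, ← hab]; exact ha)⟩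
    · intro i
      rcases lt_or_ge (i : ℕ) l.length with hi | hi
      · obtain ⟨u', hu', hc'⟩ := hstep ⟨i, hi⟩
        refine ⟨u', ?_, ?_⟩
        · simpa [List.get_eq_getElem, List.getElem_append_left hi] using hu'
        · rwa [List.take_append_of_le_length (le_of_lt hi)]
      · have hieq : (i : ℕ) = l.length := by
          have := i.2; simp at this; omega
        refine ⟨u, ?_, ?_⟩
        · have hgw : (l ++ [w]).get i = w := by
            simp [List.get_eq_getElem, hieq]
          rwa [hgw]
        · rw [hieq, List.take_left]; exact hc

lemma isDNS_iff_qdns (l : List V) : IsDNS G l ↔ QDNS G l.reverse := by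
  induction l using List.reverseRecOn with
  | nil =>
    simp only [List.reverse_nil, QDNS, IsDNS, List.nodup_nil, true_and]
    exact ⟨fun _ => trivial, fun _ i => absurd i.2 (by simp)⟩
  | append_singleton l w ih =>
    rw [List.reverse_append, List.reverse_singleton, List.singleton_append,
      isDNS_append_singleton]
    show _ ↔ QDNS G l.reverse ∧ w ∉ l.reverse ∧ ∃ u ∈ cnbr G w, domCount G u l.reverse ≤ 1
    rw [← ih, List.mem_reverse]
    constructor
    · rintro ⟨h1, h2, u, hu, hc⟩
      exact ⟨h1, h2, u, hu, by rwa [domCount_reverse]⟩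
    · rintro ⟨h1, h2, u, hu, hc⟩
      exact ⟨h1, h2, u, hu, by rwa [domCount_reverse] at hc⟩
end fin2

section fin3
variable [Fintype V] [DecidableEq V] {G : SimpleGraph V}

lemma two_le_ncard_cnbr (hiso : ∀ u : V, ∃ w, G.Adj u w) (u : V) : 2 ≤ (cnbr G u).ncard := by
  obtain ⟨w, hw⟩ := hiso u
  have hsub : ({u, w} : Set V) ⊆ cnbr G u := by
    rintro x (rfl | rfl)
    · exact Set.mem_insert _ _
    · exact Set.mem_insert_of_mem _ hw
  calc 2 = ({u, w} : Set V).ncard := (Set.ncard_pair (G.ne_of_adj hw)).symm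
    _ ≤ _ := Set.ncard_le_ncard hsub (Set.toFinite _)

lemma qdns_extend (hiso : ∀ u : V, ∃ w, G.Adj u w) :
    ∀ (n : ℕ) (l : List V), QDNS G l → Fintype.card V ≤ l.length + n →
    ∃ l', QDNS G l' ∧ (∀ u, 2 ≤ domCount G u l') ∧ l.length ≤ l'.length := by
  intro n
  induction n with
  | zero =>
    intro l hq hc
    refine ⟨l, hq, fun u => ?_, le_rfl⟩
    have hall : ∀ x : V, x ∈ l := by
      intro x
      have h1 : l.toFinset = Finset.univ := Finset.eq_univ_of_card _ (by
        rw [List.toFinset_card_of_nodup hq.nodup]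
        have := List.Nodup.length_le_card hq.nodup
        omega)
      rw [← List.mem_toFinset, h1]; exact Finset.mem_univ x
    obtain ⟨w, hw⟩ := hiso u
    have hsub : ({u, w} : Set V) ⊆ {x | x ∈ l ∧ u ∈ cnbr G x} := by
      rintro x (rfl | rfl)
      · exact ⟨hall _, Set.mem_insert _ _⟩
      · exact ⟨hall _, Set.mem_insert_of_mem _ hw.symm⟩
    calc 2 = ({u, w} : Set V).ncard := (Set.ncard_pair (G.ne_of_adj hw)).symm
      _ ≤ _ := Set.ncard_le_ncard hsub (Set.toFinite _)
  | succ n ih =>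
    intro l hq hc
    by_cases hdd : ∀ u, 2 ≤ domCount G u l
    · exact ⟨l, hq, hdd, le_rfl⟩
    · push_neg at hdd
      obtain ⟨u, hu⟩ := hdd
      have hex : ∃ w ∈ cnbr G u, w ∉ l := by
        by_contra h
        push_neg at h
        have hsub : cnbr G u ⊆ {w | w ∈ l ∧ u ∈ cnbr G w} := fun w hw =>
          ⟨h w hw, mem_cnbr_comm.mp hw⟩
        have h1 := Set.ncard_le_ncard hsub (Set.toFinite _)
        have h2 := two_le_ncard_cnbr hiso u
        unfold domCount at hu
        omega
      obtain ⟨w, hw, hwl⟩ := hex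
      have hq' : QDNS G (w :: l) := ⟨hq, hwl, u, mem_cnbr_comm.mp hw, by omega⟩
      obtain ⟨l', h1, h2, h3⟩ := ih (w :: l) hq' (by simp; omega)
      refine ⟨l', h1, h2, ?_⟩
      simp at h3; omega

lemma cnbr_induce {S : Set V} {a b : ↥S} :
    b ∈ cnbr (G.induce S) a ↔ (b : V) ∈ cnbr G (a : V) := by
  simp [cnbr, SimpleGraph.mem_neighborSet, Subtype.ext_iff]

lemma domCount_induce {S : Set V} {u : ↥S} {l : List ↥S} :
    domCount (G.induce S) u l = domCount G (u : V) (l.map Subtype.val) := by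
  unfold domCount
  have hset : {w | w ∈ l.map Subtype.val ∧ (u : V) ∈ cnbr G w} =
      Subtype.val '' {w | w ∈ l ∧ u ∈ cnbr (G.induce S) w} := by
    ext x
    simp only [Set.mem_setOf_eq, List.mem_map, Set.mem_image]
    constructor
    · rintro ⟨⟨w, hwl, rfl⟩, hc⟩
      exact ⟨w, ⟨hwl, cnbr_induce.mpr hc⟩, rfl⟩
    · rintro ⟨w, ⟨hwl, hc⟩, rfl⟩
      exact ⟨⟨w, hwl, rfl⟩, cnbr_induce.mp hc⟩
  rw [hset, Set.ncard_image_of_injective _ Subtype.val_injective]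

lemma qdns_map {S : Set V} : ∀ {l : List ↥S}, QDNS (G.induce S) l → QDNS G (l.map Subtype.val)
  | [], _ => trivial
  | w :: r, ⟨hq, hw, u, hu, hc⟩ => by
    refine ⟨qdns_map hq, ?_, (u : V), cnbr_induce.mp hu, ?_⟩
    · simp only [List.map_cons, List.mem_map]
      rintro ⟨x, hx, hxw⟩
      exact hw (by rwa [Subtype.ext hxw] at hx)
    · rw [← domCount_induce]; exact hc
end fin3

section fin4
variable [Fintype V] [DecidableEq V]

lemma qdns_reduce (G : SimpleGraph V) (v : V) :
    ∀ r : List V, QDNS G r →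
    ∃ (r' : List (({u : V | u ≠ v} : Set V) : Type _)) (k : ℕ),
      QDNS (G.induce {u : V | u ≠ v}) r' ∧
      (∀ x ∈ r', (x : V) ∈ r) ∧
      r.length ≤ r'.length + (if v ∈ r then 1 else 0) + k ∧
      k ≤ 2 ∧ k ≤ domCount G v r := by
  intro r
  induction r with
  | nil => exact fun _ => ⟨[], 0, trivial, by simp, by simp, by simp, by simp⟩
  | cons w r ih =>
    rintro ⟨hq, hwr, u, hu, hcount⟩
    obtain ⟨r', k, hq', hsub, hlen, hk2, hkd⟩ := ih hq
    have hmono : domCount G v r ≤ domCount G v (w :: r) :=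
      domCount_mono (fun x hx => List.mem_cons_of_mem _ hx)
    by_cases hwv : w = v
    · refine ⟨r', k, hq', fun x hx => List.mem_cons_of_mem _ (hsub x hx), ?_, hk2,
        le_trans hkd hmono⟩
      have hbr : v ∉ r := hwv ▸ hwr
      rw [if_neg hbr] at hlen
      simp only [List.length_cons, if_pos (show v ∈ w :: r by simp [hwv])]
      omega
    · have hbr : (if v ∈ w :: r then 1 else 0) = (if v ∈ r then 1 else 0) := by
        by_cases h : v ∈ r
        · rw [if_pos h, if_pos (List.mem_cons_of_mem _ h)]
        · rw [if_neg h, if_neg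
            (fun hm => (List.mem_cons.mp hm).elim (fun h' => hwv h'.symm) h)]
      by_cases huv : u = v
      · subst huv
        refine ⟨r', k + 1, hq', fun x hx => List.mem_cons_of_mem _ (hsub x hx), ?_, ?_, ?_⟩
        · simp only [List.length_cons, hbr]
          omega
        · omega
        · rw [domCount_cons_of_mem hu hwr]
          omega
      · refine ⟨⟨w, hwv⟩ :: r', k, ⟨hq', ?_, ⟨u, huv⟩, ?_, ?_⟩, ?_, ?_, hk2,
          le_trans hkd hmono⟩
        · intro hmem
          exact hwr (hsub _ hmem)
        · exact cnbr_induce.mpr hu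
        · rw [domCount_induce]
          refine le_trans (domCount_mono ?_) hcount
          intro x hx
          simp only [List.mem_map] at hx
          obtain ⟨y, hy, rfl⟩ := hx
          exact hsub y hy
        · intro x hx
          rcases List.mem_cons.mp hx with rfl | hx
          · exact List.mem_cons_self
          · exact List.mem_cons_of_mem _ (hsub _ hx)
        · simp only [List.length_cons, hbr]
          omega
end fin4


/-- vertex deletion decreases the Grundy double domination number by at
most 3, and never increases it. -/
theorem stmt6 [Fintype V] [DecidableEq V] (G : SimpleGraph V) (v : V)
    (hiso : ∀ u : V, ∃ w, G.Adj u w)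
    (hiso' : ∀ a : ({u : V | u ≠ v} : Set V), ∃ b,
      (G.induce {u : V | u ≠ v}).Adj a b) :
    gddn (G.induce {u : V | u ≠ v}) ≤ gddn G ∧
    gddn G ≤ gddn (G.induce {u : V | u ≠ v}) + 3 := by
  classical
  set S : Set V := {u : V | u ≠ v} with hS
  haveI : Fintype ↥S := Fintype.ofFinite _
  have bddG : BddAbove {n | ∃ l : List V, IsDDS G l ∧ l.length = n} :=
    ⟨Fintype.card V, by rintro n ⟨l, ⟨⟨hnd, _⟩, _⟩, rfl⟩; exact List.Nodup.length_le_card hnd⟩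
  have bddH : BddAbove {n | ∃ l : List ↥S, IsDDS (G.induce S) l ∧ l.length = n} :=
    ⟨Fintype.card ↥S, by rintro n ⟨l, ⟨⟨hnd, _⟩, _⟩, rfl⟩; exact List.Nodup.length_le_card hnd⟩
  have hgH : gddn (G.induce S) = sSup {n | ∃ l : List ↥S, IsDDS (G.induce S) l ∧ l.length = n} :=
    rfl
  have hgG : gddn G = sSup {n | ∃ l : List V, IsDDS G l ∧ l.length = n} := rfl
  constructor
  · rw [hgH]
    refine csSup_le' ?_
    rintro n ⟨l, ⟨hdns, hdd⟩, rfl⟩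
    have hq : QDNS (G.induce S) l.reverse := (isDNS_iff_qdns l).mp hdns
    have hqG : QDNS G (l.reverse.map Subtype.val) := qdns_map hq
    obtain ⟨l', h1, h2, h3⟩ := qdns_extend hiso (Fintype.card V) _ hqG (Nat.le_add_left _ _)
    have hmem : l'.reverse.length ∈ {n | ∃ l : List V, IsDDS G l ∧ l.length = n} :=
      ⟨l'.reverse, ⟨(isDNS_iff_qdns _).mpr (by rwa [List.reverse_reverse]),
        fun x => by rw [domCount_reverse]; exact h2 x⟩, rfl⟩
    have hle := le_csSup bddG hmem
    rw [hgG]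
    simp only [List.length_reverse, List.length_map] at h3 hle
    omega
  · rw [hgG]
    refine csSup_le' ?_
    rintro n ⟨l, ⟨hdns, hdd⟩, rfl⟩
    have hq : QDNS G l.reverse := (isDNS_iff_qdns l).mp hdns
    obtain ⟨r', k, hq', hsub, hlen, hk2, hkd⟩ := qdns_reduce G v l.reverse hq
    obtain ⟨l', h1, h2, h3⟩ :=
      qdns_extend hiso' (Fintype.card ↥S) r' hq' (Nat.le_add_left _ _)
    have hmem : l'.reverse.length ∈ {n | ∃ l : List ↥S, IsDDS (G.induce S) l ∧ l.length = n} :=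
      ⟨l'.reverse, ⟨(isDNS_iff_qdns _).mpr (by rwa [List.reverse_reverse]),
        fun x => by rw [domCount_reverse]; exact h2 x⟩, rfl⟩
    have hle := le_csSup bddH hmem
    rw [hgH]
    have hbr : (if v ∈ l.reverse then 1 else 0) ≤ 1 := by split <;> omega
    simp only [List.length_reverse] at hlen hle ⊢
    omega
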